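/- Every Set-functor satisfying |F(2+2)| > 1 and |F3| = 1 is cancellative but not zippable. -/

import Mathlib

open CategoryTheory

/-- Characteristic function of {1,2} ⊆ 3. -/
def chi12 : Fin 3 → Fin 2 := fun t => if t = 0 then 0 else 1

/-- Characteristic function of {2} ⊆ 3. -/
def chi2 : Fin 3 → Fin 2 := fun t => if t = 2 then 1 else 0

/-- A Set-functor is cancellative if ⟨F χ_{1,2}, F χ_{2}⟩ : F3 → F2 × F2 is injective. -/
def Cancellative (F : Type ⥤ Type) : Prop :=
  Function.Injective fun t : F.obj (Fin 3) => (F.map (TypeCat.ofHom chi12) t, F.map (TypeCat.ofHom chi2) t)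

/-- A Set-functor is zippable if ⟨F(A + !), F(! + B)⟩ : F(A+B) → F(A+1) × F(1+B)
is injective for all sets A, B. -/
def Zippable (F : Type ⥤ Type) : Prop :=
  ∀ A B : Type, Function.Injective fun t : F.obj (A ⊕ B) =>
    (F.map (TypeCat.ofHom (Sum.map id fun _ => PUnit.unit)) t,
      F.map (TypeCat.ofHom (Sum.map (fun _ => PUnit.unit) id)) t)

theorem stmt13 (F : Type ⥤ Type)
    (h1 : ∃ x y : F.obj (Fin 2 ⊕ Fin 2), x ≠ y)
    (h2 : Nonempty (F.obj (Fin 3))) (h3 : Subsingleton (F.obj (Fin 3))) :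
    Cancellative F ∧ ¬ Zippable F := by
  have key : ∀ {α : Type} (e : α ≃ Fin 3), Subsingleton (F.obj α) := by
    intro α e
    constructor
    intro a b
    have h := congrArg (F.map (TypeCat.ofHom (e.symm : Fin 3 → α)))
      (Subsingleton.elim (F.map (TypeCat.ofHom (e : α → Fin 3)) a) (F.map (TypeCat.ofHom (e : α → Fin 3)) b))
    have hcomp : ∀ x : F.obj α,
        F.map (TypeCat.ofHom (e.symm : Fin 3 → α)) (F.map (TypeCat.ofHom (e : α → Fin 3)) x) = x := by
      intro x
      have heq : TypeCat.ofHom (e : α → Fin 3) ≫ TypeCat.ofHom (e.symm : Fin 3 → α) = 𝟙 α := by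
        ext y
        simp [CategoryTheory.types_comp_apply, CategoryTheory.types_id_apply]
      calc F.map (TypeCat.ofHom (e.symm : Fin 3 → α)) (F.map (TypeCat.ofHom (e : α → Fin 3)) x)
          = F.map (TypeCat.ofHom (e : α → Fin 3) ≫ TypeCat.ofHom (e.symm : Fin 3 → α)) x := by
            rw [F.map_comp]; rfl
        _ = x := by rw [heq, F.map_id]; rfl
    rwa [hcomp, hcomp] at h
  constructor
  · intro a b _
    exact Subsingleton.elim a b
  · intro hz
    obtain ⟨x, y, hxy⟩ := h1
    apply hxy
    apply hz (Fin 2) (Fin 2)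
    have s1 : Subsingleton (F.obj (Fin 2 ⊕ PUnit)) :=
      key ((Equiv.sumCongr (Equiv.refl (Fin 2))
        (Equiv.ofUnique PUnit (Fin 1))).trans finSumFinEquiv)
    have s2 : Subsingleton (F.obj (PUnit ⊕ Fin 2)) :=
      key ((Equiv.sumCongr (Equiv.ofUnique PUnit (Fin 1))
        (Equiv.refl (Fin 2))).trans finSumFinEquiv)
    exact Prod.ext (Subsingleton.elim _ _) (Subsingleton.elim _ _)
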